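/- Let G be a bipartite graph of minimum degree at least 2, let u ∈ V(G), and let v ∈ N(u). Let G′ be obtained from G by deleting every edge incident to u except uv. Then the connected component of G′ containing u is not a bicluster. -/

import Mathlib

def BipartiteWith {V : Type*} (G : SimpleGraph V) (side : V → Bool) : Prop :=
  ∀ u v, G.Adj u v → side u ≠ side v

theorem stmt_14 {V : Type*} (G : SimpleGraph V) (side : V → Bool)
    (hG : BipartiteWith G side)
    (hmin : ∀ w : V, 2 ≤ (G.neighborSet w).ncard)
    (u v : V) (huv : G.Adj u v)
    (G' : SimpleGraph V)
    (hG' : G' = G.deleteEdges ((fun w => s(u, w)) '' (G.neighborSet u \ {v}))) :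
    ¬ (∀ x y, G'.Reachable u x → G'.Reachable u y → side x ≠ side y → G'.Adj x y) := by
  intro h
  subst hG'
  -- basic facts
  have hadj' : ∀ a b : V, (G.deleteEdges ((fun w => s(u, w)) '' (G.neighborSet u \ {v}))).Adj a b ↔
      G.Adj a b ∧ s(a,b) ∉ ((fun w => s(u, w)) '' (G.neighborSet u \ {v})) := by
    intro a b
    simp [SimpleGraph.deleteEdges_adj]
  set G' := G.deleteEdges ((fun w => s(u, w)) '' (G.neighborSet u \ {v})) with hG'
  have huv' : G'.Adj u v := by
    rw [hadj']
    refine ⟨huv, ?_⟩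
    rintro ⟨w, ⟨hw, hwv⟩, hs⟩
    rw [Sym2.eq_iff] at hs
    rcases hs with ⟨_, rfl⟩ | ⟨rfl, rfl⟩
    · exact hwv rfl
    · exact G.loopless.irrefl _ huv
  have hNu : ∀ z : V, G'.Adj u z → z = v := by
    intro z hz
    by_contra hzv
    rw [hadj'] at hz
    exact hz.2 ⟨z, ⟨hz.1, hzv⟩, rfl⟩
  -- pick w ∈ N(v), w ≠ u
  have hvfin : (G.neighborSet v).Finite := by
    apply Set.finite_of_ncard_ne_zero; have := hmin v; omega
  obtain ⟨a, b, ha, hb, hab⟩ := (Set.one_lt_ncard_iff hvfin).mp (by have := hmin v; omega)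
  obtain ⟨w, hw, hwu⟩ : ∃ w, G.Adj v w ∧ w ≠ u := by
    by_cases hau : a = u
    · exact ⟨b, hb, by rintro rfl; exact hab (by rw [hau])⟩
    · exact ⟨a, ha, hau⟩
  have hvw' : G'.Adj v w := by
    rw [hadj']
    refine ⟨hw, ?_⟩
    rintro ⟨y, ⟨hy, hyv⟩, hs⟩
    rw [Sym2.eq_iff] at hs
    rcases hs with ⟨rfl, rfl⟩ | ⟨rfl, rfl⟩
    · exact G.loopless.irrefl _ huv
    · exact hyv rfl
  have hsuv : side u ≠ side v := hG u v huv
  have hsvw : side v ≠ side w := hG v w hw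
  have hsuw : side u = side w := by
    revert hsuv hsvw; cases side u <;> cases side v <;> cases side w <;> simp
  have hunw : u ∉ G.neighborSet w := by
    intro hc
    exact hG w u hc (by rw [hsuw])
  -- pick z ∈ N(w), z ≠ v
  have hwfin : (G.neighborSet w).Finite := by
    apply Set.finite_of_ncard_ne_zero; have := hmin w; omega
  obtain ⟨a', b', ha', hb', hab'⟩ := (Set.one_lt_ncard_iff hwfin).mp (by have := hmin w; omega)
  obtain ⟨z, hz, hzv⟩ : ∃ z, G.Adj w z ∧ z ≠ v := by
    by_cases hav : a' = v
    · refine ⟨b', hb', ?_⟩; rintro rfl; exact hab' (by rw [hav])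
    · exact ⟨a', ha', hav⟩
  have hzu : z ≠ u := by rintro rfl; exact hunw hz
  have hwz' : G'.Adj w z := by
    rw [hadj']
    refine ⟨hz, ?_⟩
    rintro ⟨y, ⟨hy, hyv⟩, hs⟩
    rw [Sym2.eq_iff] at hs
    rcases hs with ⟨rfl, rfl⟩ | ⟨rfl, rfl⟩
    · exact hwu rfl
    · exact hzu rfl
  have hsuz : side u ≠ side z := by
    have := hG w z hz
    rw [hsuw]; exact this
  have hreach : G'.Reachable u z :=
    (huv'.reachable.trans hvw'.reachable).trans hwz'.reachable
  have := h u z (SimpleGraph.Reachable.refl u) hreach hsuz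
  exact hzv (hNu z this)
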